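/- arXiv:1812.11340 — 3 statements merged into one kernel-verified Lean document; each statement's English description precedes it below -/
import Mathlib

section
/- Let m ≥ 1 be an integer, b > 0, and c₁, …, c_m > 0 with sin(πc_j/b) ≠ 0 for all j. Let A ∈ M_{2m}(ℝ) be the block-diagonal matrix whose j-th 2×2 diagonal block is (1/c_j)·[[sin(2c_jπ/b), 1 − cos(2c_jπ/b)], [cos(2c_jπ/b) − 1, sin(2c_jπ/b)]]. Then for every V, W ∈ ℝ^{2m} and v ∈ ℝ, the determinant of the (2m+1)×(2m+1) bordered matrix [[A, W], [Vᵀ, v]] (A in the top-left 2m×2m corner, W as last column, Vᵀ as last row, v in the bottom-right corner) equals det(A) · ( v + (1/2)·Σ_{j=1}^{m} c_j·( V_{2j−1}W_{2j} − V_{2j}W_{2j−1} − (V_{2j−1}W_{2j−1} + V_{2j}W_{2j})·cos(c_jπ/b)/sin(c_jπ/b) ) ). -/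
open Real Finset Matrix

/-- The `j`-th `2×2` diagonal block
`(1/c)·[[sin(2cπ/b), 1 − cos(2cπ/b)], [cos(2cπ/b) − 1, sin(2cπ/b)]]`. -/
noncomputable def Ablock (b c : ℝ) : Matrix (Fin 2) (Fin 2) ℝ :=
  (1 / c) • !![Real.sin (2 * c * Real.pi / b), 1 - Real.cos (2 * c * Real.pi / b);
               Real.cos (2 * c * Real.pi / b) - 1, Real.sin (2 * c * Real.pi / b)]

/-- The `2m×2m` block-diagonal matrix `A` with blocks `Ablock b (c j)`. -/
noncomputable def Amat (m : ℕ) (b : ℝ) (c : Fin m → ℝ) :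
    Matrix (Fin 2 × Fin m) (Fin 2 × Fin m) ℝ :=
  Matrix.blockDiagonal fun j => Ablock b (c j)

/-- The `(2m+1)×(2m+1)` bordered matrix `[[A, W], [Vᵀ, v]]`: `A` in the top-left
corner, the column `W` as last column, the row `Vᵀ` as last row, and `v` in the
bottom-right corner. -/
noncomputable def borderedMat (m : ℕ) (b : ℝ) (c : Fin m → ℝ)
    (V W : Fin 2 × Fin m → ℝ) (v : ℝ) :
    Matrix ((Fin 2 × Fin m) ⊕ Unit) ((Fin 2 × Fin m) ⊕ Unit) ℝ :=
  Matrix.fromBlocks (Amat m b c)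
    (Matrix.of fun i _ => W i)
    (Matrix.of fun _ j => V j)
    (Matrix.of fun _ _ => v)

noncomputable def Binv (b c : ℝ) : Matrix (Fin 2) (Fin 2) ℝ :=
  (c / 2) • !![Real.cos (c * Real.pi / b) / Real.sin (c * Real.pi / b), -1;
               1, Real.cos (c * Real.pi / b) / Real.sin (c * Real.pi / b)]

lemma Ablock_mul_Binv (b c : ℝ) (hc : c ≠ 0)
    (hs : Real.sin (c * Real.pi / b) ≠ 0) : Ablock b c * Binv b c = 1 := by
  have h2 : (2:ℝ) * c * Real.pi / b = 2 * (c * Real.pi / b) := by ring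
  have hpy := Real.sin_sq_add_cos_sq (c * Real.pi / b)
  ext i j
  fin_cases i <;> fin_cases j <;>
    · simp only [Ablock, Binv, Matrix.mul_apply, Fin.sum_univ_two, Matrix.smul_apply,
        Matrix.cons_val', Matrix.cons_val_zero, Matrix.cons_val_one, Matrix.head_cons,
        Matrix.head_fin_const, Matrix.empty_val', Matrix.cons_val_fin_one, smul_eq_mul,
        Matrix.one_apply, h2, Real.sin_two_mul, Real.cos_two_mul, Matrix.of_apply,
        Fin.zero_eta, Fin.mk_one, Fin.isValue, zero_ne_one, one_ne_zero, ↓reduceIte]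
      field_simp
      first
      | linear_combination (-(4:ℝ)*c^2*Real.cos (c*Real.pi/b)) * hpy
      | linear_combination ((4:ℝ)*c*Real.cos (c*Real.pi/b)) * hpy
      | linear_combination ((4:ℝ)*c^2*Real.cos (c*Real.pi/b)) * hpy
      | linear_combination (-(4:ℝ)*c*Real.cos (c*Real.pi/b)) * hpy
      | linear_combination ((2:ℝ)*c) * hpy
      | linear_combination ((2:ℝ)*c^2) * hpy
      | linear_combination (-(2:ℝ)*c) * hpy
      | linear_combination (-(2:ℝ)*c^2) * hpy
      | linear_combination ((4:ℝ)*c) * hpy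
      | linear_combination ((4:ℝ)*c^2) * hpy
      | linear_combination (-(2:ℝ)*Real.cos (c*Real.pi/b)) * hpy
      | linear_combination ((2:ℝ)*Real.cos (c*Real.pi/b)) * hpy
      | ring

/-- Bordered-determinant formula: for `m ≥ 1`, `b > 0`,
`c₁, …, c_m > 0` with `sin(πc_j/b) ≠ 0`, and any `V, W ∈ ℝ^{2m}`, `v ∈ ℝ`,
`det [[A, W], [Vᵀ, v]] = det A · (v + ½ Σ_j c_j (V_{2j−1}W_{2j} − V_{2j}W_{2j−1}
− (V_{2j−1}W_{2j−1} + V_{2j}W_{2j})·cot(c_jπ/b)))`.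
Here the entry `2j−1` of a vector is its `(0, j)` entry and the entry `2j` is its
`(1, j)` entry. -/
theorem statement2 (m : ℕ) (hm : 1 ≤ m) (b : ℝ) (hb : 0 < b)
    (c : Fin m → ℝ) (hc : ∀ j, 0 < c j)
    (hsin : ∀ j, Real.sin (Real.pi * c j / b) ≠ 0)
    (V W : Fin 2 × Fin m → ℝ) (v : ℝ) :
    (borderedMat m b c V W v).det =
      (Amat m b c).det *
        (v + (1 / 2) * ∑ j, c j *
          (V (0, j) * W (1, j) - V (1, j) * W (0, j) -
            (V (0, j) * W (0, j) + V (1, j) * W (1, j)) *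
              Real.cos (c j * Real.pi / b) / Real.sin (c j * Real.pi / b))) := by
  classical
  have hsin' : ∀ j, Real.sin (c j * Real.pi / b) ≠ 0 := by
    intro j
    rw [show c j * Real.pi / b = Real.pi * c j / b by ring]
    exact hsin j
  have hAB : Amat m b c * Matrix.blockDiagonal (fun j => Binv b (c j)) = 1 := by
    rw [Amat, ← Matrix.blockDiagonal_mul]
    have h : (fun j => Ablock b (c j) * Binv b (c j))
        = fun _ => (1 : Matrix (Fin 2) (Fin 2) ℝ) := by
      funext j
      exact Ablock_mul_Binv b (c j) (hc j).ne' (hsin' j)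
    rw [h]
    exact Matrix.blockDiagonal_one
  haveI : Invertible (Amat m b c) := invertibleOfRightInverse _ _ hAB
  have hinv : ⅟ (Amat m b c) = Matrix.blockDiagonal (fun j => Binv b (c j)) :=
    invOf_eq_right_inv hAB
  rw [borderedMat, Matrix.det_fromBlocks₁₁, hinv]
  congr 1
  rw [Matrix.det_unique]
  simp only [Matrix.sub_apply, Matrix.mul_apply, Matrix.of_apply, Matrix.blockDiagonal_apply,
    Fintype.sum_prod_type, mul_ite, mul_zero, ite_mul, zero_mul,
    Finset.sum_ite_eq', Finset.mem_univ, if_true, Fin.sum_univ_two]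
  rw [Finset.mul_sum]
  rw [sub_eq_add_neg]
  congr 1
  rw [← Finset.sum_add_distrib, ← Finset.sum_neg_distrib]
  refine Finset.sum_congr rfl fun j _ => ?_
  simp only [Binv, Matrix.smul_apply, Matrix.cons_val', Matrix.cons_val_zero,
    Matrix.cons_val_one, Matrix.head_cons, Matrix.head_fin_const, Matrix.empty_val',
    Matrix.cons_val_fin_one, smul_eq_mul, Matrix.of_apply]
  field_simp
  ring
end

section
/- Let n ≥ 1 and let A, B ∈ Mₙ(ℝ). Suppose that rank(A) = n − 1 and that the function η ↦ det(A + η·B) is o(η) as η → 0 (equivalently, det(A) = 0 and the coefficient of η in the polynomial det(A + ηB) also vanishes). Then B maps the kernel of A into the image of A: for every u ∈ ℝⁿ with A·u = 0, there exists w ∈ ℝⁿ with B·u = A·w. -/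
open Matrix Filter Asymptotics Module

lemma exists_basis_head (n : ℕ) (i0 : Fin n) (u : Fin n → ℝ) (hu : u ≠ 0) :
    ∃ b : Basis (Fin n) ℝ (Fin n → ℝ), b i0 = u := by
  have hli : LinearIndepOn ℝ id ({u} : Set (Fin n → ℝ)) :=
    (linearIndepOn_singleton_iff ℝ).mpr hu
  let b := Basis.extend hli
  have hmem : u ∈ hli.extend (Set.subset_univ _) := hli.subset_extend _ rfl
  haveI : Fintype (hli.extend (Set.subset_univ ({u} : Set (Fin n → ℝ)))) :=
    FiniteDimensional.fintypeBasisIndex b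
  have hcard : Fintype.card (hli.extend (Set.subset_univ ({u} : Set (Fin n → ℝ)))) = n := by
    rw [← finrank_eq_card_basis b]
    simp [finrank_pi]
  let e : (hli.extend (Set.subset_univ ({u} : Set (Fin n → ℝ)))) ≃ Fin n :=
    Fintype.equivFinOfCardEq hcard
  let e' := e.trans (Equiv.swap (e ⟨u, hmem⟩) i0)
  refine ⟨b.reindex e', ?_⟩
  have : e'.symm i0 = ⟨u, hmem⟩ := by
    simp [e', Equiv.symm_trans_apply, Equiv.symm_swap, Equiv.swap_apply_right]
  rw [Basis.reindex_apply, this]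
  exact Basis.extend_apply_self hli _

/-- Let `A, B` be real `n×n` matrices with `rank A = n − 1`, and
suppose `η ↦ det(A + η·B)` is `o(η)` as `η → 0`. Then `B` maps the kernel of `A`
into the image of `A`: for every `u` with `A·u = 0` there is `w` with `B·u = A·w`. -/
theorem statement3 (n : ℕ) (hn : 1 ≤ n) (A B : Matrix (Fin n) (Fin n) ℝ)
    (hrank : A.rank = n - 1)
    (ho : (fun η : ℝ => (A + η • B).det) =o[nhds (0 : ℝ)] fun η => η) :
    ∀ u : Fin n → ℝ, A.mulVec u = 0 → ∃ w : Fin n → ℝ, B.mulVec u = A.mulVec w := by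
  intro u hu0
  rcases eq_or_ne u 0 with rfl | hu
  · exact ⟨0, by simp [mulVec_zero]⟩
  set i0 : Fin n := ⟨0, hn⟩ with hi0
  -- kernel of A is span of u
  have hker : LinearMap.ker A.mulVecLin = Submodule.span ℝ {u} := by
    have hrn := LinearMap.finrank_range_add_finrank_ker A.mulVecLin
    have hfr : finrank ℝ (LinearMap.range A.mulVecLin) = n - 1 := hrank
    have hdim : finrank ℝ (Fin n → ℝ) = n := by simp
    have hk : finrank ℝ (LinearMap.ker A.mulVecLin) = 1 := by omega
    have hle : Submodule.span ℝ {u} ≤ LinearMap.ker A.mulVecLin := by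
      rw [Submodule.span_le, Set.singleton_subset_iff]
      exact hu0
    symm
    apply Submodule.eq_of_le_of_finrank_le hle
    rw [hk, finrank_span_singleton hu]
  -- basis with b i0 = u, matrix C
  obtain ⟨b, hb⟩ := exists_basis_head n i0 u hu
  set C : Matrix (Fin n) (Fin n) ℝ := (Pi.basisFun ℝ (Fin n)).toMatrix ⇑b with hC
  have hCe : ∀ k j, C k j = b j k := by
    intro k j
    simp [hC, Basis.toMatrix_apply]
  haveI : Invertible C := (Pi.basisFun ℝ (Fin n)).invertibleToMatrix b
  have hCinj : Function.Injective C.mulVec := by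
    intro x y hxy
    have : C⁻¹.mulVec (C.mulVec x) = C⁻¹.mulVec (C.mulVec y) := by rw [hxy]
    simpa [mulVec_mulVec, Matrix.inv_mul_of_invertible] using this
  have hCu : C.mulVec (Pi.single i0 1) = u := by
    ext i
    simp [mulVec, dotProduct, hCe, Pi.single_apply, ← hb]
  -- the key function g
  set g : ℝ → ℝ := fun η =>
    (updateCol ((A + η • B) * C) i0 (B.mulVec u)).det with hg
  -- factor out η
  have hfac : ∀ η : ℝ, ((A + η • B) * C).det = η * g η := by
    intro η
    have hcol : (fun i => ((A + η • B) * C) i i0) = η • B.mulVec u := by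
      funext i
      have : (fun k => C k i0) = u := by
        funext k; rw [hCe k i0, hb]
      calc ((A + η • B) * C) i i0 = ((A + η • B).mulVec u) i := by
            simp [Matrix.mul_apply, mulVec, dotProduct, ← this]
        _ = (η • B.mulVec u) i := by
            rw [add_mulVec, hu0, smul_mulVec, zero_add]
    conv_lhs => rw [← updateCol_eq_self ((A + η • B) * C) i0, hcol]
    rw [det_updateCol_smul]
  -- from littleO, g tends to 0 in punctured nhds
  have hg0 : Tendsto g (nhdsWithin (0:ℝ) {(0:ℝ)}ᶜ) (nhds 0) := by
    rw [NormedAddCommGroup.tendsto_nhds_zero]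
    intro ε hε
    have hb2 := (ho.const_mul_left C.det).bound (half_pos hε)
    have hb3 : ∀ᶠ η : ℝ in nhdsWithin (0:ℝ) {(0:ℝ)}ᶜ,
        ‖C.det * (A + η • B).det‖ ≤ ε / 2 * ‖η‖ :=
      nhdsWithin_le_nhds hb2
    filter_upwards [hb3, self_mem_nhdsWithin] with η hη hη0
    have hηne : η ≠ 0 := hη0
    have heq : η * g η = (A + η • B).det * C.det := by
      rw [← hfac, Matrix.det_mul]
    have hle2 : ‖η‖ * ‖g η‖ ≤ ε / 2 * ‖η‖ := by
      rw [← norm_mul, heq, mul_comm ((A + η • B).det)]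
      exact hη
    have hpos : 0 < ‖η‖ := norm_pos_iff.mpr hηne
    have : ‖g η‖ ≤ ε / 2 :=
      le_of_mul_le_mul_left (by linarith [hle2]) hpos
    exact lt_of_le_of_lt this (half_lt_self hε)
  -- continuity of g
  have hgc : Continuous g := by
    apply Continuous.matrix_det
    apply Continuous.matrix_updateCol
    · exact Continuous.matrix_mul (continuous_const.add
        (continuous_id.smul continuous_const)) continuous_const
    · exact continuous_const
  -- hence g 0 = 0
  have hgz : g 0 = 0 := by
    have h1 : Tendsto g (nhdsWithin (0:ℝ) {(0:ℝ)}ᶜ) (nhds (g 0)) :=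
      (hgc.tendsto 0).mono_left nhdsWithin_le_nhds
    exact tendsto_nhds_unique h1 hg0
  -- so the limiting matrix is singular
  have hdet0 : (updateCol (A * C) i0 (B.mulVec u)).det = 0 := by
    have : g 0 = (updateCol (A * C) i0 (B.mulVec u)).det := by
      simp [hg]
    rw [← this, hgz]
  obtain ⟨x, hx, hMx⟩ := (Matrix.exists_mulVec_eq_zero_iff).mpr hdet0
  -- decompose the relation
  have hkeygen : ∀ c : Fin n → ℝ, ((A * C).updateCol i0 c).mulVec x = 0 →
      x i0 • c + (A * C).mulVec (Function.update x i0 0) = 0 := by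
    intro c hc
    rw [← hc]
    ext i
    rw [Pi.add_apply, Pi.smul_apply]
    simp only [mulVec, dotProduct, updateCol_apply]
    rw [← Finset.add_sum_erase _ _ (Finset.mem_univ i0),
        ← Finset.add_sum_erase _ _ (Finset.mem_univ i0)]
    simp only [if_pos rfl, Function.update_self, mul_zero, smul_eq_mul]
    rw [mul_comm]
    congr 1
    rw [zero_add]
    apply Finset.sum_congr rfl
    intro j hj
    have hji : j ≠ i0 := Finset.ne_of_mem_erase hj
    rw [if_neg hji, Function.update_of_ne hji]
  have hkey := hkeygen (B.mulVec u) hMx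
  rcases eq_or_ne (x i0) 0 with hxi | hxi
  · -- impossible: x would be zero
    exfalso
    have hx0 : Function.update x i0 0 = x := by
      funext j
      rcases eq_or_ne j i0 with rfl | hj
      · rw [Function.update_self, hxi]
      · rw [Function.update_of_ne hj]
    rw [hx0, hxi, zero_smul, zero_add, ← mulVec_mulVec] at hkey
    have hmem : C.mulVec x ∈ LinearMap.ker A.mulVecLin := by
      simpa [Matrix.mulVecLin_apply] using hkey
    rw [hker, Submodule.mem_span_singleton] at hmem
    obtain ⟨t, ht⟩ := hmem
    have heq2 : C.mulVec x = C.mulVec (t • (Pi.single i0 1 : Fin n → ℝ)) := by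
      rw [mulVec_smul, hCu, ht]
    have hxt : x = t • (Pi.single i0 1 : Fin n → ℝ) := hCinj heq2
    have hti : t = 0 := by
      have : x i0 = t := by simp [hxt]
      rw [← this, hxi]
    apply hx
    rw [hxt, hti, zero_smul]
  · -- solve for B u
    refine ⟨(-(x i0)⁻¹) • C.mulVec (Function.update x i0 0), ?_⟩
    have hz := congrFun hkey
    funext i
    have h1 := hz i
    simp only [Pi.add_apply, Pi.smul_apply, Pi.zero_apply, smul_eq_mul] at h1
    rw [mulVec_smul, mulVec_mulVec, Pi.smul_apply, smul_eq_mul]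
    have hrw : -(x i0)⁻¹ * ((A * C) *ᵥ Function.update x i0 0) i
        = -((x i0)⁻¹ * ((A * C) *ᵥ Function.update x i0 0) i) := by ring
    rw [hrw]
    field_simp
    linarith [h1]
end

section
/- Fix an integer n ≥ 1 and reals b₁, …, bₙ > 0. Let τ > 0 satisfy sin(bᵢτ/2) ≠ 0 for all i, let h ∈ ℝ^{2n} and rᵢ = √(h_{2i−1}² + h_{2i}²). Then, with D(τ) = J̄⁻¹(e^{τJ̄} − I_{2n}) (which is invertible) and ∇_h ẑ(τ, h) the row vector with entries (∂ẑ/∂h_j)(τ, h) = h_j·(bᵢτ − sin(bᵢτ))/bᵢ for j ∈ {2i−1, 2i}, one has the explicit formula: ∇_h ẑ(τ, h) · D(τ)⁻¹ · ( x̂(τ, h) − τ·ĥ(τ, h) ) = Σ_{i=1}^{n} rᵢ² · ( sin(bᵢτ) − bᵢτ ) · ( bᵢτ·cos(bᵢτ/2) − 2·sin(bᵢτ/2) ) / ( 2·bᵢ·sin(bᵢτ/2) ). -/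
open Real Matrix

/-- The `2n×2n` block-diagonal matrix `J̄` whose `i`-th `2×2` diagonal block is
`[[0, bᵢ], [−bᵢ, 0]]`. -/
noncomputable def Jbar (n : ℕ) (b : Fin n → ℝ) :
    Matrix (Fin 2 × Fin n) (Fin 2 × Fin n) ℝ :=
  Matrix.blockDiagonal fun i => !![0, b i; -b i, 0]

/-- `D(τ) = J̄⁻¹(e^{τJ̄} − I)`. -/
noncomputable def Dmat (n : ℕ) (b : Fin n → ℝ) (τ : ℝ) :
    Matrix (Fin 2 × Fin n) (Fin 2 × Fin n) ℝ :=
  (Jbar n b)⁻¹ * (NormedSpace.exp (τ • Jbar n b) - 1)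

/-- The covector `ĥ(t, h) = e^{tJ̄}h` of the nilpotent geodesic flow. -/
noncomputable def hhat (n : ℕ) (b : Fin n → ℝ) (t : ℝ) (h : Fin 2 × Fin n → ℝ) :
    Fin 2 × Fin n → ℝ :=
  (NormedSpace.exp (t • Jbar n b)).mulVec h

/-- The horizontal component `x̂(t, h) = J̄⁻¹(e^{tJ̄} − I)h`. -/
noncomputable def xhat (n : ℕ) (b : Fin n → ℝ) (t : ℝ) (h : Fin 2 × Fin n → ℝ) :
    Fin 2 × Fin n → ℝ :=
  (Dmat n b t).mulVec h

/-- The gradient (row vector) of the vertical component `ẑ` in `h`: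
`(∂ẑ/∂h_j)(τ, h) = h_j·(bᵢτ − sin(bᵢτ))/bᵢ` for `j ∈ {2i−1, 2i}`;
the coordinate `h_{2i−1}` is the `(0, i)` entry of `h` and `h_{2i}` its `(1, i)` entry. -/
noncomputable def gradz (n : ℕ) (b : Fin n → ℝ) (τ : ℝ) (h : Fin 2 × Fin n → ℝ) :
    Fin 2 × Fin n → ℝ :=
  fun j => h j * (b j.2 * τ - Real.sin (b j.2 * τ)) / b j.2

/-! ### Auxiliary material -/

attribute [local instance] Matrix.linftyOpNormedRing Matrix.linftyOpNormedAlgebra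

/-- The real-algebra embedding of `ℂ` into `2×2` real matrices. -/
noncomputable def cmat : ℂ →ₐ[ℝ] Matrix (Fin 2) (Fin 2) ℝ where
  toFun z := !![z.re, -z.im; z.im, z.re]
  map_one' := by simp [Matrix.one_fin_two]
  map_mul' z w := by
    ext i j
    fin_cases i <;> fin_cases j <;>
      simp [Matrix.mul_apply, Fin.sum_univ_two, Complex.mul_re, Complex.mul_im] <;> ring
  map_zero' := by
    ext i j
    fin_cases i <;> fin_cases j <;> simp
  map_add' z w := by
    ext i j
    fin_cases i <;> fin_cases j <;> simp [Matrix.add_apply] <;> ring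
  commutes' r := by
    ext i j
    fin_cases i <;> fin_cases j <;>
      simp [Matrix.algebraMap_matrix_apply]

lemma cmat_continuous : Continuous cmat := by
  have := cmat.toLinearMap.continuous_of_finiteDimensional
  simpa using this

lemma exp_rot (a : ℝ) :
    NormedSpace.exp (!![0, a; -a, 0] : Matrix (Fin 2) (Fin 2) ℝ) =
      !![Real.cos a, Real.sin a; -Real.sin a, Real.cos a] := by
  have h1 : (!![0, a; -a, 0] : Matrix (Fin 2) (Fin 2) ℝ) = cmat (((-a : ℝ) : ℂ) * Complex.I) := by
    ext i j
    fin_cases i <;> fin_cases j <;> simp [cmat]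
  erw [h1, ← NormedSpace.map_exp cmat cmat_continuous]
  have h2 : NormedSpace.exp (((-a : ℝ) : ℂ) * Complex.I)
      = Complex.exp (((-a : ℝ) : ℂ) * Complex.I) := by
    rw [Complex.exp_eq_exp_ℂ]
  rw [h2]
  have e : -((a : ℂ) * Complex.I) = ((-a : ℝ) : ℂ) * Complex.I := by
    rw [Complex.ofReal_neg, neg_mul]
  have hre : (Complex.exp (-((a : ℂ) * Complex.I))).re = Real.cos a := by
    rw [e, Complex.exp_ofReal_mul_I_re, Real.cos_neg]
  have him : (Complex.exp (-((a : ℂ) * Complex.I))).im = -Real.sin a := by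
    rw [e, Complex.exp_ofReal_mul_I_im, Real.sin_neg]
  ext i j
  fin_cases i <;> fin_cases j <;> simp [cmat, hre, him]

/-- The `i`-th block of `e^{τ J̄}`. -/
noncomputable def Eblk (β τ : ℝ) : Matrix (Fin 2) (Fin 2) ℝ :=
  !![Real.cos (β * τ), Real.sin (β * τ); -Real.sin (β * τ), Real.cos (β * τ)]

/-- The `i`-th block of `D(τ)`. -/
noncomputable def Dblk (β τ : ℝ) : Matrix (Fin 2) (Fin 2) ℝ :=
  !![Real.sin (β * τ) / β, (1 - Real.cos (β * τ)) / β;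
     (Real.cos (β * τ) - 1) / β, Real.sin (β * τ) / β]

/-- The `i`-th block of `D(τ)⁻¹`. -/
noncomputable def Cblk (β τ : ℝ) : Matrix (Fin 2) (Fin 2) ℝ :=
  !![β * Real.sin (β * τ) / (2 * (1 - Real.cos (β * τ))),
     β * (Real.cos (β * τ) - 1) / (2 * (1 - Real.cos (β * τ)));
     β * (1 - Real.cos (β * τ)) / (2 * (1 - Real.cos (β * τ))),
     β * Real.sin (β * τ) / (2 * (1 - Real.cos (β * τ)))]

lemma one_sub_cos (β τ : ℝ) :
    1 - Real.cos (β * τ) = 2 * Real.sin (β * τ / 2) ^ 2 := by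
  have h2 := Real.cos_two_mul' (β * τ / 2)
  rw [show 2 * (β * τ / 2) = β * τ by ring] at h2
  rw [h2]
  nlinarith [Real.sin_sq_add_cos_sq (β * τ / 2)]

lemma sin_full (β τ : ℝ) :
    Real.sin (β * τ) = 2 * Real.sin (β * τ / 2) * Real.cos (β * τ / 2) := by
  have h2 := Real.sin_two_mul (β * τ / 2)
  rw [show 2 * (β * τ / 2) = β * τ by ring] at h2
  exact h2

lemma one_sub_cos_ne (β τ : ℝ) (hs : Real.sin (β * τ / 2) ≠ 0) :
    1 - Real.cos (β * τ) ≠ 0 := by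
  rw [one_sub_cos]
  positivity

lemma CD_eq_one (β τ : ℝ) (hβ : β ≠ 0) (hs : Real.sin (β * τ / 2) ≠ 0) :
    Cblk β τ * Dblk β τ = 1 := by
  have hc := one_sub_cos_ne β τ hs
  have hp := Real.sin_sq_add_cos_sq (β * τ)
  ext i j
  fin_cases i <;> fin_cases j <;>
    simp [Cblk, Dblk, Matrix.mul_apply, Fin.sum_univ_two, Matrix.one_apply]
  all_goals field_simp
  all_goals
    first
      | ring1
      | linear_combination β * hp
      | linear_combination (-β) * hp
      | linear_combination (2 * β) * hp
      | linear_combination (-2 * β) * hp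
      | linear_combination hp
      | linear_combination (-1) * hp

lemma CE_eq (β τ : ℝ) (hβ : β ≠ 0) (hs : Real.sin (β * τ / 2) ≠ 0) :
    Cblk β τ * Eblk β τ =
      !![β * Real.sin (β * τ) / (2 * (1 - Real.cos (β * τ))),
         β * (1 - Real.cos (β * τ)) / (2 * (1 - Real.cos (β * τ)));
         β * (Real.cos (β * τ) - 1) / (2 * (1 - Real.cos (β * τ))),
         β * Real.sin (β * τ) / (2 * (1 - Real.cos (β * τ)))] := by
  have hc := one_sub_cos_ne β τ hs
  have hp := Real.sin_sq_add_cos_sq (β * τ)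
  ext i j
  fin_cases i <;> fin_cases j <;>
    simp [Cblk, Eblk, Matrix.mul_apply, Fin.sum_univ_two]
  all_goals field_simp
  all_goals
    first
      | ring1
      | linear_combination β * hp
      | linear_combination (-β) * hp
      | linear_combination (2 * β) * hp
      | linear_combination (-2 * β) * hp
      | linear_combination hp
      | linear_combination (-1) * hp

lemma dot_bd (n : ℕ) (A : Fin n → Matrix (Fin 2) (Fin 2) ℝ) (u v : Fin 2 × Fin n → ℝ) :
    u ⬝ᵥ (blockDiagonal A).mulVec v
      = ∑ i : Fin n, ∑ k : Fin 2, ∑ l : Fin 2, u (k, i) * (A i k l * v (l, i)) := by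
  simp only [dotProduct, Matrix.mulVec, Fintype.sum_prod_type, Matrix.blockDiagonal_apply,
    ite_mul, zero_mul, Finset.sum_ite_eq, Finset.mem_univ, if_true, Finset.mul_sum]
  exact Finset.sum_comm

/-- For `n ≥ 1`, `b₁, …, bₙ > 0`, `τ > 0` with `sin(bᵢτ/2) ≠ 0`
for all `i`, and `h ∈ ℝ^{2n}` with `rᵢ = √(h_{2i−1}² + h_{2i}²)`:
`∇_h ẑ(τ,h) · D(τ)⁻¹ · (x̂(τ,h) − τ·ĥ(τ,h))
  = Σ_i rᵢ²·(sin(bᵢτ) − bᵢτ)·(bᵢτ·cos(bᵢτ/2) − 2·sin(bᵢτ/2))/(2·bᵢ·sin(bᵢτ/2))`. -/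
theorem statement16 (n : ℕ) (hn : 1 ≤ n) (b : Fin n → ℝ) (hb : ∀ i, 0 < b i)
    (τ : ℝ) (hτ : 0 < τ) (hsin : ∀ i, Real.sin (b i * τ / 2) ≠ 0)
    (h : Fin 2 × Fin n → ℝ) :
    gradz n b τ h ⬝ᵥ
        (Dmat n b τ)⁻¹.mulVec (xhat n b τ h - τ • hhat n b τ h) =
      ∑ i, Real.sqrt (h (0, i) ^ 2 + h (1, i) ^ 2) ^ 2 *
        (Real.sin (b i * τ) - b i * τ) *
        (b i * τ * Real.cos (b i * τ / 2) - 2 * Real.sin (b i * τ / 2)) /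
        (2 * b i * Real.sin (b i * τ / 2)) := by
  have hbne : ∀ i, b i ≠ 0 := fun i => (hb i).ne'
  -- the exponential is block diagonal
  have hexp : NormedSpace.exp (τ • Jbar n b) = blockDiagonal fun i => Eblk (b i) τ := by
    have key : ∀ i : Fin n, NormedSpace.exp
        (τ • (!![0, b i; -b i, 0] : Matrix (Fin 2) (Fin 2) ℝ)) = Eblk (b i) τ := by
      intro i
      have h1 : τ • (!![0, b i; -b i, 0] : Matrix (Fin 2) (Fin 2) ℝ)
          = !![0, b i * τ; -(b i * τ), 0] := by
        ext k l
        fin_cases k <;> fin_cases l <;> simp [mul_comm]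
      rw [h1, exp_rot, Eblk]
    erw [Jbar, ← Matrix.blockDiagonal_smul, Matrix.exp_blockDiagonal, Pi.exp_def]
    simp only [Pi.smul_apply, key]
    exact congrArg _ (funext key)
  -- the inverse of Jbar
  have hJinv : (Jbar n b)⁻¹ = blockDiagonal fun i => !![0, -(b i)⁻¹; (b i)⁻¹, 0] := by
    apply Matrix.inv_eq_right_inv
    rw [Jbar, ← Matrix.blockDiagonal_mul, ← Matrix.blockDiagonal_one]
    apply congrArg
    funext i
    ext k l
    fin_cases k <;> fin_cases l <;>
      simp [Matrix.mul_apply, Fin.sum_univ_two, Matrix.one_apply, hbne i]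
  -- D is block diagonal
  have hD : Dmat n b τ = blockDiagonal fun i => Dblk (b i) τ := by
    rw [Dmat, hexp, hJinv, ← Matrix.blockDiagonal_one, ← Matrix.blockDiagonal_sub,
      ← Matrix.blockDiagonal_mul]
    apply congrArg
    funext i
    ext k l
    fin_cases k <;> fin_cases l <;>
      simp [Matrix.mul_apply, Fin.sum_univ_two, Matrix.one_apply, Eblk, Dblk,
        Matrix.sub_apply]
    all_goals field_simp
    all_goals ring
  -- the inverse of D is block diagonal
  have hDinv : (Dmat n b τ)⁻¹ = blockDiagonal fun i => Cblk (b i) τ := by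
    apply Matrix.inv_eq_right_inv
    rw [hD, ← Matrix.blockDiagonal_mul, ← Matrix.blockDiagonal_one]
    apply congrArg
    funext i
    exact mul_eq_one_comm.mp (CD_eq_one (b i) τ (hbne i) (hsin i))
  -- the argument vector
  have hvec : xhat n b τ h - τ • hhat n b τ h
      = (blockDiagonal fun i => Dblk (b i) τ - τ • Eblk (b i) τ).mulVec h := by
    have : (fun i => Dblk (b i) τ - τ • Eblk (b i) τ)
        = (fun i => Dblk (b i) τ) - τ • (fun i => Eblk (b i) τ) := rfl
    rw [this, Matrix.blockDiagonal_sub, Matrix.blockDiagonal_smul, Matrix.sub_mulVec,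
      Matrix.smul_mulVec, xhat, hhat, hD, hexp]
  rw [hDinv, hvec, Matrix.mulVec_mulVec, ← Matrix.blockDiagonal_mul, dot_bd]
  apply Finset.sum_congr rfl
  intro i _
  have hM : Cblk (b i) τ * (Dblk (b i) τ - τ • Eblk (b i) τ)
      = 1 - τ • (Cblk (b i) τ * Eblk (b i) τ) := by
    rw [Matrix.mul_sub, CD_eq_one (b i) τ (hbne i) (hsin i), Matrix.mul_smul]
  rw [hM, CE_eq (b i) τ (hbne i) (hsin i), Real.sq_sqrt (by positivity)]
  have hcid : Real.cos (b i * τ) = 1 - 2 * Real.sin (b i * τ / 2) ^ 2 := by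
    have := one_sub_cos (b i) τ
    linarith
  simp only [gradz, Fin.sum_univ_two, Matrix.sub_apply, Matrix.smul_apply, Matrix.one_apply,
    Matrix.cons_val', Matrix.cons_val_zero, Matrix.cons_val_one, Matrix.head_cons,
    Matrix.head_fin_const, Matrix.empty_val', Matrix.cons_val_fin_one, smul_eq_mul,
    Matrix.of_apply, if_true, if_false, zero_ne_one, one_ne_zero]
  rw [sin_full, hcid]
  have hsne := hsin i
  have hbne' := hbne i
  field_simp
  ring
end
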